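/- Let u, v be monomials of degree d with x_1 | u, x_1 | v, ν_1(v) = b > 0, and let I = (L(u,v)). Set u' = u/x_1^b, v' = v/x_1^b and I' = (L(u', v')). Then Ass(S/I) = {(x_1)} ∪ Ass(S/I'). -/

import Mathlib

open MvPolynomial

noncomputable section

namespace LexPaper

/-- total degree of an exponent vector -/
def deg {sigma : Type*} (a : sigma  →₀  ℕ) : ℕ := a.sum fun _ e => e

/-- the monomial x^a as an element of the polynomial ring -/
def mon (k : Type*) [Field k] {sigma : Type*} (a : sigma  →₀  ℕ) : MvPolynomial sigma k :=
  MvPolynomial.monomial a 1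

/-- `lexLe a b` : a ≤_lex b, where x_1 > x_2 > ... > x_n (index 0 is the largest variable). -/
def lexLe {n : ℕ} (a b : Fin n  →₀  ℕ) : Prop := toLex a ≤ toLex b

/-- `lexLt a b` : a <_lex b. -/
def lexLt {n : ℕ} (a b : Fin n  →₀  ℕ) : Prop := toLex a < toLex b

/-- the lexsegment set L(u,v) : all exponent vectors of degree d between v and u in lex order -/
def lexSeg {n : ℕ} (d : ℕ) (u v : Fin n  →₀  ℕ) : Set (Fin n  →₀  ℕ) :=
  {m | deg m = d  ∧  lexLe v m  ∧  lexLe m u}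

/-- the lexsegment ideal (L(u,v)) -/
def lexIdeal (k : Type*) [Field k] {n : ℕ} (d : ℕ) (u v : Fin n  →₀  ℕ) :
    Ideal (MvPolynomial (Fin n) k) :=
  Ideal.span (mon k '' lexSeg d u v)

/-- the maximal graded ideal (x_1, ..., x_n) -/
def mMax (k : Type*) [Field k] (n : ℕ) : Ideal (MvPolynomial (Fin n) k) :=
  Ideal.span (Set.range (X : Fin n -> MvPolynomial (Fin n) k))

/-- depth of S/I: the supremum of lengths of regular sequences on S/I consisting of
elements of the maximal graded ideal -/
def quotDepth (k : Type*) [Field k] {n : ℕ} (I : Ideal (MvPolynomial (Fin n) k)) : ℕ :=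
  sSup {r : ℕ | ∃ rs : List (MvPolynomial (Fin n) k), rs.length = r  ∧ 
    (∀ x ∈ rs, x ∈ mMax k n)  ∧  RingTheory.Sequence.IsRegular (MvPolynomial (Fin n) k ⧸ I) rs}

/-! ### Auxiliary lemmas -/

section Aux

variable {k : Type*} [Field k] {n : ℕ}

lemma deg_add {σ : Type*} (a b : σ →₀ ℕ) : deg (a + b) = deg a + deg b :=
  Finsupp.sum_add_index' (fun _ => rfl) (fun _ _ _ => rfl)

lemma deg_single {σ : Type*} (i : σ) (c : ℕ) : deg (Finsupp.single i c) = c :=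
  Finsupp.sum_single_index rfl

lemma apply_le_deg {σ : Type*} (a : σ →₀ ℕ) (i : σ) : a i ≤ deg a := by
  classical
  by_cases h : a i = 0
  · simp [h]
  · exact Finset.single_le_sum (fun j _ => Nat.zero_le _) (Finsupp.mem_support_iff.mpr h)

lemma lexLe_add_right {a b s : Fin n →₀ ℕ} : lexLe (a + s) (b + s) ↔ lexLe a b := by
  unfold lexLe
  rw [toLex_add, toLex_add]
  exact add_le_add_iff_right _

lemma lexLe_apply_zero {hn : 0 < n} {a b : Fin n →₀ ℕ} (h : lexLe a b) :
    a ⟨0, hn⟩ ≤ b ⟨0, hn⟩ := by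
  by_contra hlt
  push_neg at hlt
  have : toLex b < toLex a := by
    rw [Finsupp.Lex.lt_iff]
    exact ⟨⟨0, hn⟩, fun j hj => absurd hj (by simp [Fin.lt_def]), hlt⟩
  exact absurd h (not_le_of_gt this)

/-- The key combinatorial fact: the lexsegment of `u, v` is the shift of the lexsegment
of `u/x_1^b, v/x_1^b` by `x_1^b`, where `b = ν_1(v)`. -/
lemma lexSeg_shift (hn : 0 < n) {d : ℕ} (u v : Fin n →₀ ℕ) (hu : deg u = d) (hv : deg v = d)
    (huv : lexLe v u) :
    lexSeg d u v = (fun m => m + Finsupp.single ⟨0, hn⟩ (v ⟨0, hn⟩)) ''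
      lexSeg (d - v ⟨0, hn⟩) (u - Finsupp.single ⟨0, hn⟩ (v ⟨0, hn⟩))
        (v - Finsupp.single ⟨0, hn⟩ (v ⟨0, hn⟩)) := by
  set i0 : Fin n := ⟨0, hn⟩ with hi0
  set b : ℕ := v i0 with hbdef
  set s : Fin n →₀ ℕ := Finsupp.single i0 b with hs
  have hsv : s ≤ v := by
    rw [hs]
    exact (Finsupp.single_le_iff).mpr le_rfl
  have hv0u0 : v i0 ≤ u i0 := lexLe_apply_zero (hn := hn) huv
  have hsu : s ≤ u := by
    rw [hs]
    exact (Finsupp.single_le_iff).mpr hv0u0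
  have hvs : (v - s) + s = v := tsub_add_cancel_of_le hsv
  have hus : (u - s) + s = u := tsub_add_cancel_of_le hsu
  have hbd : b ≤ d := by
    rw [hbdef, ← hv]
    exact apply_le_deg v i0
  ext m
  constructor
  · rintro ⟨hmd, hvm, hmu⟩
    have hbm : b ≤ m i0 := lexLe_apply_zero (hn := hn) hvm
    have hsm : s ≤ m := by
      rw [hs]
      exact (Finsupp.single_le_iff).mpr hbm
    have hms : (m - s) + s = m := tsub_add_cancel_of_le hsm
    refine ⟨m - s, ⟨?_, ?_, ?_⟩, hms⟩
    · have : deg ((m - s) + s) = d := by rw [hms, hmd]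
      rw [deg_add, deg_single] at this
      omega
    · rw [← lexLe_add_right (s := s), hvs, hms]
      exact hvm
    · rw [← lexLe_add_right (s := s), hus, hms]
      exact hmu
  · rintro ⟨m', ⟨hm'd, hvm', hm'u⟩, rfl⟩
    refine ⟨?_, ?_, ?_⟩
    · rw [deg_add, deg_single, hm'd]
      omega
    · rw [← hvs]
      exact lexLe_add_right.mpr hvm'
    · rw [← hus]
      exact lexLe_add_right.mpr hm'u

/-- The lexsegment ideal factors as `(x_1^b) * I'`. -/
lemma lexIdeal_shift (hn : 0 < n) {d : ℕ} (u v : Fin n →₀ ℕ) (hu : deg u = d) (hv : deg v = d)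
    (huv : lexLe v u) :
    lexIdeal k d u v =
      Ideal.span {(X ⟨0, hn⟩ ^ (v ⟨0, hn⟩) : MvPolynomial (Fin n) k)} *
        lexIdeal k (d - v ⟨0, hn⟩) (u - Finsupp.single ⟨0, hn⟩ (v ⟨0, hn⟩))
          (v - Finsupp.single ⟨0, hn⟩ (v ⟨0, hn⟩)) := by
  set i0 : Fin n := ⟨0, hn⟩
  set b : ℕ := v i0
  set s : Fin n →₀ ℕ := Finsupp.single i0 b
  set L' : Set (Fin n →₀ ℕ) := lexSeg (d - b) (u - s) (v - s)
  rw [lexIdeal, lexIdeal, lexSeg_shift hn u v hu hv huv, Ideal.span_mul_span',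
    Set.singleton_mul]
  congr 1
  rw [← Set.image_comp, ← Set.image_comp]
  apply Set.image_congr
  intro m' _
  show mon k (m' + s) = X i0 ^ b * mon k m'
  simp only [mon, X_pow_eq_monomial, monomial_mul, one_mul, add_comm]
  rfl

lemma X_dvd_iff_aeval (i : Fin n) (p : MvPolynomial (Fin n) k) :
    (X i ∣ p) ↔ aeval (fun j => if j = i then (0 : MvPolynomial (Fin n) k) else X j) p = 0 := by
  set ψ : MvPolynomial (Fin n) k →ₐ[k] MvPolynomial (Fin n) k :=
    aeval (fun j => if j = i then (0 : MvPolynomial (Fin n) k) else X j) with hψ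
  have hψX : ψ (X i) = 0 := by simp [hψ]
  have hcomp : (Ideal.Quotient.mkₐ k (Ideal.span {X i})).comp ψ =
      Ideal.Quotient.mkₐ k (Ideal.span {X i}) := by
    apply MvPolynomial.algHom_ext
    intro j
    by_cases hj : j = i
    · subst hj
      simp only [AlgHom.comp_apply, hψX, map_zero]
      symm
      rw [Ideal.Quotient.mkₐ_eq_mk, Ideal.Quotient.eq_zero_iff_mem]
      exact Ideal.mem_span_singleton_self _
    · simp [hψ, hj]
  constructor
  · rintro ⟨q, rfl⟩
    rw [map_mul, hψX, zero_mul]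
  · intro h
    have := congrArg (fun φ => φ p) hcomp
    simp only [AlgHom.comp_apply, h, map_zero] at this
    rw [Ideal.Quotient.mkₐ_eq_mk] at this
    have hm : p ∈ Ideal.span {X i} := by
      rw [← Ideal.Quotient.eq_zero_iff_mem]
      exact this.symm
    exact (Ideal.mem_span_singleton).mp hm

lemma prime_X (i : Fin n) : Prime (X i : MvPolynomial (Fin n) k) := by
  refine ⟨X_ne_zero _, ?_, ?_⟩
  · intro h
    have := h.map (constantCoeff : MvPolynomial (Fin n) k →+* k)
    rw [constantCoeff_X] at this
    exact not_isUnit_zero this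
  · intro a b hab
    rw [X_dvd_iff_aeval] at hab ⊢
    rw [map_mul] at hab
    rcases mul_eq_zero.mp hab with h | h
    · exact Or.inl h
    · right; rw [X_dvd_iff_aeval]; exact h

lemma mem_assPrimes_iff {K p : Ideal (MvPolynomial (Fin n) k)} :
    p ∈ associatedPrimes (MvPolynomial (Fin n) k) (MvPolynomial (Fin n) k ⧸ K) ↔
      p.IsPrime ∧ ∃ g, ∀ a, a ∈ p ↔ a * g ∈ K := by
  rw [AssociatedPrimes.mem_iff, isAssociatedPrime_iff]
  refine and_congr_right fun hp => ?_
  have key : ∀ (a g : MvPolynomial (Fin n) k),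
      a • (Ideal.Quotient.mk K g) = Ideal.Quotient.mk K (a * g) := by
    intro a g
    rw [← smul_eq_mul]
    exact (Submodule.Quotient.mk_smul K a g).symm
  constructor
  · rintro ⟨x, hx⟩
    obtain ⟨g, rfl⟩ := Ideal.Quotient.mk_surjective x
    refine ⟨g, fun a => ?_⟩
    rw [hx, Submodule.mem_colon_singleton, Submodule.mem_bot, key, Ideal.Quotient.eq_zero_iff_mem]
  · rintro ⟨g, hg⟩
    refine ⟨Ideal.Quotient.mk K g, ?_⟩
    ext a
    rw [hg a, Submodule.mem_colon_singleton, Submodule.mem_bot, key, Ideal.Quotient.eq_zero_iff_mem]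

/-- The main algebraic step:
`Ass(S/(x_i^b · J)) = {(x_i)} ∪ Ass(S/J)` provided `b > 0` and `J` has an element not
divisible by `x_i`. -/
lemma assoc_shift {b : ℕ} (hb : 0 < b) (i : Fin n) (J : Ideal (MvPolynomial (Fin n) k))
    (hw : ∃ g₀ ∈ J, ¬ (X i ∣ g₀)) :
    associatedPrimes (MvPolynomial (Fin n) k)
        (MvPolynomial (Fin n) k ⧸ (Ideal.span {(X i ^ b : MvPolynomial (Fin n) k)} * J)) =
      insert (Ideal.span {(X i : MvPolynomial (Fin n) k)})
        (associatedPrimes (MvPolynomial (Fin n) k) (MvPolynomial (Fin n) k ⧸ J)) := by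
  obtain ⟨g₀, hg₀J, hg₀X⟩ := hw
  have hXp : Prime (X i : MvPolynomial (Fin n) k) := prime_X i
  have hfne : (X i : MvPolynomial (Fin n) k) ^ b ≠ 0 := pow_ne_zero _ (X_ne_zero _)
  set f : MvPolynomial (Fin n) k := X i ^ b with hf
  ext p
  rw [mem_assPrimes_iff, Set.mem_insert_iff, mem_assPrimes_iff]
  constructor
  · rintro ⟨hp, g, hg⟩
    by_cases hcase : ∃ a, a ∉ p ∧ (X i : MvPolynomial (Fin n) k) ^ b ∣ a * g
    · -- p is an associated prime of S/J
      obtain ⟨a, hap, g', hg'⟩ := hcase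
      right
      refine ⟨hp, g', fun c => ?_⟩
      constructor
      · intro hc
        have hca : c * a ∈ p := Ideal.mul_mem_right a p hc
        have : (c * a) * g ∈ Ideal.span {f} * J := (hg _).mp hca
        rw [Ideal.mem_span_singleton_mul] at this
        obtain ⟨z, hzJ, hz⟩ := this
        have hfz : f * z = f * (c * g') := by
          rw [hz]
          calc c * a * g = c * (a * g) := by ring
            _ = c * (f * g') := by rw [hg', ← hf]
            _ = f * (c * g') := by ring
        have hzz : z = c * g' := mul_left_cancel₀ hfne hfz
        rwa [← hzz]
      · intro hc
        have hmem : f * (c * g') ∈ Ideal.span {f} * J :=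
          Ideal.mul_mem_mul (Ideal.mem_span_singleton_self f) hc
        have heq : f * (c * g') = (c * a) * g := by
          calc f * (c * g') = c * (f * g') := by ring
            _ = c * (a * g) := by rw [hf, ← hg']
            _ = (c * a) * g := by ring
        rw [heq] at hmem
        have hca : c * a ∈ p := (hg _).mpr hmem
        rcases hp.mem_or_mem hca with h | h
        · exact h
        · exact absurd h hap
    · -- p = (X i)
      left
      push_neg at hcase
      have hone : (1 : MvPolynomial (Fin n) k) ∉ p := by
        intro h1
        exact hp.ne_top (Ideal.eq_top_of_isUnit_mem p h1 isUnit_one)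
      have hgnd : ¬ ((X i : MvPolynomial (Fin n) k) ^ b ∣ g) := by
        intro hdvd
        exact absurd (by rwa [one_mul]) (not_imp_not.mpr (fun h => h) (hcase 1 hone))
      have hXbp : (X i : MvPolynomial (Fin n) k) ^ b ∈ p := by
        by_contra hXb
        exact (hcase _ hXb) ⟨g, rfl⟩
      have hXip : (X i : MvPolynomial (Fin n) k) ∈ p := hp.mem_of_pow_mem b hXbp
      apply le_antisymm
      · intro a hap
        have : a * g ∈ Ideal.span {f} * J := (hg a).mp hap
        have hdvd : (X i : MvPolynomial (Fin n) k) ^ b ∣ a * g := by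
          have := Ideal.mul_le_left (J := J) (I := Ideal.span {f}) this
          rwa [Ideal.mem_span_singleton] at this
        rw [Ideal.mem_span_singleton]
        by_contra hXa
        exact hgnd (hXp.pow_dvd_of_dvd_mul_left b hXa hdvd)
      · rwa [Ideal.span_le, Set.singleton_subset_iff]
  · rintro (rfl | ⟨hp, g, hg⟩)
    · -- (X i) is an associated prime, witness x_i^{b-1} * g₀
      refine ⟨(Ideal.span_singleton_prime (X_ne_zero i)).mpr hXp,
        X i ^ (b - 1) * g₀, fun a => ?_⟩
      have hbb : (X i : MvPolynomial (Fin n) k) ^ b = X i ^ (b - 1) * X i := by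
        rw [← pow_succ]
        congr 1
        omega
      constructor
      · intro ha
        rw [Ideal.mem_span_singleton] at ha
        obtain ⟨c, rfl⟩ := ha
        have : X i * c * (X i ^ (b - 1) * g₀) = c * (f * g₀) := by
          rw [hf, hbb]; ring
        rw [this]
        exact Ideal.mul_mem_left _ c
          (Ideal.mul_mem_mul (Ideal.mem_span_singleton_self f) hg₀J)
      · intro ha
        have hdvd : f ∣ a * (X i ^ (b - 1) * g₀) := by
          have := Ideal.mul_le_left (J := J) (I := Ideal.span {f}) ha
          rwa [Ideal.mem_span_singleton] at this
        rw [hf, hbb] at hdvd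
        have h2 : (X i : MvPolynomial (Fin n) k) ^ (b - 1) * X i ∣
            X i ^ (b - 1) * (a * g₀) := by
          have : a * (X i ^ (b - 1) * g₀) = X i ^ (b - 1) * (a * g₀) := by ring
          rwa [this] at hdvd
        have h3 : (X i : MvPolynomial (Fin n) k) ∣ a * g₀ :=
          (mul_dvd_mul_iff_left (pow_ne_zero (b - 1) (X_ne_zero i))).mp h2
        rcases hXp.2.2 _ _ h3 with h | h
        · rwa [Ideal.mem_span_singleton]
        · exact absurd h hg₀X
    · -- associated primes of S/J lift, witness f * g
      refine ⟨hp, f * g, fun a => ?_⟩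
      constructor
      · intro ha
        have : f * (a * g) ∈ Ideal.span {f} * J :=
          Ideal.mul_mem_mul (Ideal.mem_span_singleton_self f) ((hg a).mp ha)
        have heq : f * (a * g) = a * (f * g) := by ring
        rwa [heq] at this
      · intro ha
        rw [Ideal.mem_span_singleton_mul] at ha
        obtain ⟨z, hzJ, hz⟩ := ha
        have : f * z = f * (a * g) := by rw [hz]; ring
        have hzz : z = a * g := mul_left_cancel₀ hfne this
        exact (hg a).mpr (hzz ▸ hzJ)

end Aux

theorem statement9 {k : Type*} [Field k] {n d : ℕ} (hn : 0 < n) (hd : 2 ≤ d)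
    (u v : Fin n →₀ ℕ) (hu : deg u = d) (hv : deg v = d) (huv : lexLe v u)
    (hx1u : 0 < u ⟨0, hn⟩) (hb : 0 < v ⟨0, hn⟩) :
    associatedPrimes (MvPolynomial (Fin n) k) (MvPolynomial (Fin n) k ⧸ (lexIdeal k d u v)) =
      insert (Ideal.span {(X ⟨0, hn⟩ : MvPolynomial (Fin n) k)})
        (associatedPrimes (MvPolynomial (Fin n) k) (MvPolynomial (Fin n) k ⧸ (lexIdeal k (d - v ⟨0, hn⟩) (u - Finsupp.single ⟨0, hn⟩ (v ⟨0, hn⟩)) (v - Finsupp.single ⟨0, hn⟩ (v ⟨0, hn⟩))))) := by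
  have hbd : v ⟨0, hn⟩ ≤ d := by
    rw [← hv]
    exact apply_le_deg v ⟨0, hn⟩
  rw [lexIdeal_shift hn u v hu hv huv]
  apply assoc_shift hb
  -- witness: the monomial v/x_1^b belongs to I' and is not divisible by x_1
  have hsv : Finsupp.single ⟨0, hn⟩ (v ⟨0, hn⟩) ≤ v := (Finsupp.single_le_iff).mpr le_rfl
  have hv0u0 : v ⟨0, hn⟩ ≤ u ⟨0, hn⟩ := lexLe_apply_zero (hn := hn) huv
  have hsu : Finsupp.single ⟨0, hn⟩ (v ⟨0, hn⟩) ≤ u := (Finsupp.single_le_iff).mpr hv0u0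
  have hvs : (v - Finsupp.single ⟨0, hn⟩ (v ⟨0, hn⟩)) + Finsupp.single ⟨0, hn⟩ (v ⟨0, hn⟩) = v :=
    tsub_add_cancel_of_le hsv
  have hus : (u - Finsupp.single ⟨0, hn⟩ (v ⟨0, hn⟩)) + Finsupp.single ⟨0, hn⟩ (v ⟨0, hn⟩) = u :=
    tsub_add_cancel_of_le hsu
  refine ⟨mon k (v - Finsupp.single ⟨0, hn⟩ (v ⟨0, hn⟩)), ?_, ?_⟩
  · apply Ideal.subset_span
    apply Set.mem_image_of_mem
    refine ⟨?_, le_rfl, ?_⟩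
    · have hh : deg ((v - Finsupp.single ⟨0, hn⟩ (v ⟨0, hn⟩)) +
          Finsupp.single ⟨0, hn⟩ (v ⟨0, hn⟩)) = d := by rw [hvs, hv]
      rw [deg_add, deg_single] at hh
      omega
    · rw [← lexLe_add_right (s := Finsupp.single ⟨0, hn⟩ (v ⟨0, hn⟩)), hvs, hus]
      exact huv
  · rw [mon, X_dvd_monomial]
    push_neg
    refine ⟨one_ne_zero, ?_⟩
    rw [Finsupp.tsub_apply, Finsupp.single_eq_same]
    omega

end LexPaper
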